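/- Let F and G be continuously differentiable and f and g be twice continuously differentiable. Suppose λ > 0 and (x,y,u,v,w) ∈ ℝⁿ×ℝᵐ×ℝᵖ×ℝ^q×ℝ^q satisfy the LLVF stationarity conditions with lower-level point equal to y: ∇F(x,y) + ∇G(x,y)ᵀu + ∇g(x,y)ᵀv + λ∇f(x,y) − λ(∇_x f(x,y) + ∇_x g(x,y)ᵀw, 0) = 0; ∇_y f(x,y) + ∇_y g(x,y)ᵀw = 0; u ≥ 0, G(x,y) ≤ 0, uᵀG(x,y) = 0; v ≥ 0, g(x,y) ≤ 0, vᵀg(x,y) = 0; w ≥ 0, g(x,y) ≤ 0, wᵀg(x,y) = 0. Suppose further that ∇_{(x,y)}(∇_yℓ)(x,y,w) = 0 and that there exists s ∈ ℝᵐ with ∇_y g(x,y)s − λg(x,y) ≥ 0 and wᵀ∇_y g(x,y)s = 0. Then, with t := λg(x,y) − ∇_y g(x,y)s, the tuple (x,y,w,s,u,v,t) satisfies the KKT-reformulation stationarity system for the same λ: ∇F(x,y) + ∇G(x,y)ᵀu + ∇g(x,y)ᵀ(v − λw) + [∇_{(x,y)}(∇_yℓ)(x,y,w)]ᵀs = 0;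 ∇_y f(x,y) + ∇_y g(x,y)ᵀw = 0; −λg(x,y) + ∇_y g(x,y)s + t = 0; u ≥ 0, G(x,y) ≤ 0, uᵀG(x,y) = 0; v ≥ 0, g(x,y) ≤ 0, vᵀg(x,y) = 0; t ≤ 0, w ≥ 0, tᵀw = 0. -/

import Mathlib

/-- `Vec k` is the Euclidean space `ℝ^k`. -/
abbrev Vec (k : ℕ) := Fin k → ℝ

/-- The `i`-th component of `∇_y ℓ(x, y, z)` where `ℓ(x,y,z) = f(x,y) + zᵀg(x,y)` is the
lower-level Lagrangian, as a function of the triple `w = (x, y, z)`. -/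
noncomputable def gradyL {n m q : ℕ} (f : Vec n → Vec m → ℝ) (g : Vec n → Vec m → Vec q)
    (i : Fin m) (w : Vec n × Vec m × Vec q) : ℝ :=
  fderiv ℝ (fun y => f w.1 y + ∑ k, w.2.2 k * g w.1 y k) w.2.1 (Pi.single i 1)


lemma fderiv_split {a b : ℕ} (φ : Vec a × Vec b → ℝ) (x : Vec a) (y : Vec b)
    (hφ : DifferentiableAt ℝ φ (x, y)) :
    fderiv ℝ φ (x, y) =
      (fderiv ℝ (fun x' => φ (x', y)) x).comp (ContinuousLinearMap.fst ℝ (Vec a) (Vec b))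
      + (fderiv ℝ (fun y' => φ (x, y')) y).comp (ContinuousLinearMap.snd ℝ (Vec a) (Vec b)) := by
  set L := fderiv ℝ φ (x, y) with hL
  have hx : HasFDerivAt (fun x' => φ (x', y))
      (L.comp (ContinuousLinearMap.inl ℝ (Vec a) (Vec b))) x := by
    have h : HasFDerivAt (fun x' : Vec a => (x', y))
        (ContinuousLinearMap.inl ℝ (Vec a) (Vec b)) x :=
      HasFDerivAt.prodMk (hasFDerivAt_id x) (hasFDerivAt_const y x)
    exact hφ.hasFDerivAt.comp x h
  have hy : HasFDerivAt (fun y' => φ (x, y'))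
      (L.comp (ContinuousLinearMap.inr ℝ (Vec a) (Vec b))) y := by
    have h : HasFDerivAt (fun y' : Vec b => (x, y'))
        (ContinuousLinearMap.inr ℝ (Vec a) (Vec b)) y :=
      HasFDerivAt.prodMk (hasFDerivAt_const x y) (hasFDerivAt_id y)
    exact hφ.hasFDerivAt.comp y h
  rw [hx.fderiv, hy.fderiv]
  refine ContinuousLinearMap.ext fun z => ?_
  simp only [ContinuousLinearMap.add_apply, ContinuousLinearMap.comp_apply]
  simp only [ContinuousLinearMap.coe_fst', ContinuousLinearMap.coe_snd',
    ContinuousLinearMap.inl_apply, ContinuousLinearMap.inr_apply]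
  rw [← L.map_add]
  congr 1
  simp [Prod.ext_iff]

/-- An LLVF stationary point `(x,y)` with lower-level point `y` and
multiplier `w` such that `∇_{(x,y)}(∇_yℓ)(x,y,w) = 0` and `∃ s` with
`∇_y g(x,y)s − λg(x,y) ≥ 0` and `wᵀ∇_y g(x,y)s = 0` yields, with
`t := λg(x,y) − ∇_y g(x,y)s`, a stationary point of the KKT reformulation for the
same `λ`. -/
theorem stmt_14
    {n m p q : ℕ} (hn : 0 < n) (hm : 0 < m) (hp : 0 < p) (hq : 0 < q)
    (F : Vec n → Vec m → ℝ) (G : Vec n → Vec m → Vec p)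
    (f : Vec n → Vec m → ℝ) (g : Vec n → Vec m → Vec q)
    (hF : ContDiff ℝ 1 (fun pq : Vec n × Vec m => F pq.1 pq.2))
    (hG : ContDiff ℝ 1 (fun pq : Vec n × Vec m => G pq.1 pq.2))
    (hf : ContDiff ℝ 2 (fun pq : Vec n × Vec m => f pq.1 pq.2))
    (hg : ContDiff ℝ 2 (fun pq : Vec n × Vec m => g pq.1 pq.2))
    (lam : ℝ) (hlam : 0 < lam)
    (x : Vec n) (y : Vec m) (u : Vec p) (v w : Vec q)
    -- LLVF stationarity at (x, y) with lower-level point y and multiplier w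
    (h1 : fderiv ℝ (fun pq : Vec n × Vec m => F pq.1 pq.2) (x, y)
        + ∑ j, u j • fderiv ℝ (fun pq : Vec n × Vec m => G pq.1 pq.2 j) (x, y)
        + ∑ k, v k • fderiv ℝ (fun pq : Vec n × Vec m => g pq.1 pq.2 k) (x, y)
        + lam • fderiv ℝ (fun pq : Vec n × Vec m => f pq.1 pq.2) (x, y)
        - lam • ((fderiv ℝ (fun x' => f x' y) x
            + ∑ k, w k • fderiv ℝ (fun x' => g x' y k) x).comp
              (ContinuousLinearMap.fst ℝ (Vec n) (Vec m)))
        = 0)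
    (h2 : fderiv ℝ (f x) y + ∑ k, w k • fderiv ℝ (fun y' => g x y' k) y = 0)
    (h3 : (∀ j, 0 ≤ u j) ∧ (∀ j, G x y j ≤ 0) ∧ ∑ j, u j * G x y j = 0)
    (h4 : (∀ k, 0 ≤ v k) ∧ (∀ k, g x y k ≤ 0) ∧ ∑ k, v k * g x y k = 0)
    (h5 : (∀ k, 0 ≤ w k) ∧ (∀ k, g x y k ≤ 0) ∧ ∑ k, w k * g x y k = 0)
    -- ∇_{(x,y)}(∇_y ℓ)(x, y, w) = 0
    (h6 : ∀ i : Fin m,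
      fderiv ℝ (fun pq : Vec n × Vec m => gradyL f g i (pq.1, pq.2, w)) (x, y) = 0)
    -- existence of s with ∇_y g(x,y)s − λg(x,y) ≥ 0 and wᵀ∇_y g(x,y)s = 0
    (s : Vec m)
    (hs1 : ∀ k, 0 ≤ fderiv ℝ (fun y' => g x y' k) y s - lam * g x y k)
    (hs2 : ∑ k, w k * fderiv ℝ (fun y' => g x y' k) y s = 0) :
    -- the KKT-reformulation stationarity system for (x, y, w, s, u, v, t)
    ∃ t : Vec q, (∀ k, t k = lam * g x y k - fderiv ℝ (fun y' => g x y' k) y s) ∧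
      (fderiv ℝ (fun pq : Vec n × Vec m => F pq.1 pq.2) (x, y)
        + ∑ j, u j • fderiv ℝ (fun pq : Vec n × Vec m => G pq.1 pq.2 j) (x, y)
        + ∑ k, (v k - lam * w k) •
            fderiv ℝ (fun pq : Vec n × Vec m => g pq.1 pq.2 k) (x, y)
        + ∑ i, s i •
            fderiv ℝ (fun pq : Vec n × Vec m => gradyL f g i (pq.1, pq.2, w)) (x, y)
        = 0) ∧
      (fderiv ℝ (f x) y + ∑ k, w k • fderiv ℝ (fun y' => g x y' k) y = 0) ∧
      (∀ k, -lam * g x y k + fderiv ℝ (fun y' => g x y' k) y s + t k = 0) ∧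
      ((∀ j, 0 ≤ u j) ∧ (∀ j, G x y j ≤ 0) ∧ ∑ j, u j * G x y j = 0) ∧
      ((∀ k, 0 ≤ v k) ∧ (∀ k, g x y k ≤ 0) ∧ ∑ k, v k * g x y k = 0) ∧
      ((∀ k, t k ≤ 0) ∧ (∀ k, 0 ≤ w k) ∧ ∑ k, t k * w k = 0) := by
  classical
  have hdf : DifferentiableAt ℝ (fun pq : Vec n × Vec m => f pq.1 pq.2) (x, y) :=
    (hf.differentiable (by norm_num)).differentiableAt
  have hdg : ∀ k, DifferentiableAt ℝ (fun pq : Vec n × Vec m => g pq.1 pq.2 k) (x, y) :=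
    fun k => (differentiableAt_pi.mp (hg.differentiable (by norm_num)).differentiableAt) k
  have splitf : fderiv ℝ (fun pq : Vec n × Vec m => f pq.1 pq.2) (x, y)
      = (fderiv ℝ (fun x' => f x' y) x).comp (ContinuousLinearMap.fst ℝ (Vec n) (Vec m))
        + (fderiv ℝ (f x) y).comp (ContinuousLinearMap.snd ℝ (Vec n) (Vec m)) :=
    fderiv_split _ x y hdf
  have splitg : ∀ k, fderiv ℝ (fun pq : Vec n × Vec m => g pq.1 pq.2 k) (x, y)
      = (fderiv ℝ (fun x' => g x' y k) x).comp (ContinuousLinearMap.fst ℝ (Vec n) (Vec m))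
        + (fderiv ℝ (fun y' => g x y' k) y).comp (ContinuousLinearMap.snd ℝ (Vec n) (Vec m)) :=
    fun k => fderiv_split _ x y (hdg k)
  have key : fderiv ℝ (fun pq : Vec n × Vec m => f pq.1 pq.2) (x, y)
      + ∑ k, w k • fderiv ℝ (fun pq : Vec n × Vec m => g pq.1 pq.2 k) (x, y)
      = (fderiv ℝ (fun x' => f x' y) x
          + ∑ k, w k • fderiv ℝ (fun x' => g x' y k) x).comp
          (ContinuousLinearMap.fst ℝ (Vec n) (Vec m)) := by
    refine ContinuousLinearMap.ext fun z => ?_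
    have h2z := congrArg (fun T : Vec m →L[ℝ] ℝ => T z.2) h2
    simp only [ContinuousLinearMap.add_apply, ContinuousLinearMap.coe_sum',
      Finset.sum_apply, ContinuousLinearMap.coe_smul', Pi.smul_apply, smul_eq_mul,
      ContinuousLinearMap.zero_apply] at h2z
    rw [splitf]
    rw [Finset.sum_congr rfl fun k _ => congrArg (w k • ·) (splitg k)]
    simp only [ContinuousLinearMap.add_apply, ContinuousLinearMap.comp_apply,
      ContinuousLinearMap.coe_sum', Finset.sum_apply, ContinuousLinearMap.coe_smul',
      Pi.smul_apply, smul_eq_mul, ContinuousLinearMap.coe_fst', ContinuousLinearMap.coe_snd',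
      mul_add, Finset.sum_add_distrib]
    linarith [h2z]
  refine ⟨fun k => lam * g x y k - fderiv ℝ (fun y' => g x y' k) y s,
    fun k => rfl, ?_, h2, fun k => by ring, h3, h4, ?_, h5.1, ?_⟩
  · -- main stationarity equation
    have hz : ∑ i, s i • fderiv ℝ (fun pq : Vec n × Vec m => gradyL f g i (pq.1, pq.2, w)) (x, y)
        = (0 : Vec n × Vec m →L[ℝ] ℝ) :=
      Finset.sum_eq_zero fun i _ => by rw [h6 i, smul_zero]
    have hsum : ∑ k, (v k - lam * w k) •
        fderiv ℝ (fun pq : Vec n × Vec m => g pq.1 pq.2 k) (x, y)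
        = ∑ k, v k • fderiv ℝ (fun pq : Vec n × Vec m => g pq.1 pq.2 k) (x, y)
          - lam • ∑ k, w k • fderiv ℝ (fun pq : Vec n × Vec m => g pq.1 pq.2 k) (x, y) := by
      rw [Finset.smul_sum, ← Finset.sum_sub_distrib]
      exact Finset.sum_congr rfl fun k _ => by module
    rw [hz, hsum, add_zero]
    rw [← key] at h1
    linear_combination (norm := module) h1
  · -- t ≤ 0
    intro k
    show lam * g x y k - fderiv ℝ (fun y' => g x y' k) y s ≤ 0
    have := hs1 k
    linarith
  · -- tᵀw = 0
    show ∑ k, (lam * g x y k - fderiv ℝ (fun y' => g x y' k) y s) * w k = 0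
    have : ∑ k, (lam * g x y k - fderiv ℝ (fun y' => g x y' k) y s) * w k
        = lam * ∑ k, w k * g x y k - ∑ k, w k * fderiv ℝ (fun y' => g x y' k) y s := by
      rw [Finset.mul_sum, ← Finset.sum_sub_distrib]
      exact Finset.sum_congr rfl fun k _ => by ring
    rw [this, h5.2.2, hs2]
    ring
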